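/- arXiv:2501.00291 — 2 statements merged into one kernel-verified Lean document; each statement's English description precedes it below -/
import Mathlib

section
/- Let a, b ∈ ℕ with (a,b) ≠ (0,0). Define f : ℕ × ℕ → ℤ by f(p,q) = min(p+1,q+1) − (if p ≥ a and q ≥ b then min(p−a+1, q−b+1) else 0). Then the supremum of f over ℕ × ℕ equals max(a,b), and it is attained. -/
/-- The maximal weight multiplicity of the quotient `Δ(ν)/Δ(ν − aα − bβ)` of Verma modules
over `sl₃` equals `max a b`, and it is attained. -/
theorem max_weight_multiplicity_verma_quotient (a b : ℕ) (hab : (a, b) ≠ (0, 0)) :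
    IsGreatest
      (Set.range (fun pq : ℕ × ℕ =>
        (min (pq.1 + 1) (pq.2 + 1) : ℤ) -
          (if a ≤ pq.1 ∧ b ≤ pq.2 then
            min ((pq.1 : ℤ) - a + 1) ((pq.2 : ℤ) - b + 1) else 0)))
      (max a b : ℤ) := by
  have hm : 1 ≤ max a b := by
    rcases Nat.eq_zero_or_pos a with ha | ha
    · rcases Nat.eq_zero_or_pos b with hb | hb
      · exact absurd (by simp [ha, hb]) hab
      · omega
    · omega
  constructor
  · refine ⟨(max a b - 1, max a b - 1), ?_⟩
    simp only
    split_ifs with h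
    · push_cast [Nat.cast_sub hm]
      omega
    · push_cast [Nat.cast_sub hm]
      omega
  · rintro x ⟨⟨p, q⟩, rfl⟩
    simp only
    split_ifs with h <;> push_cast <;> omega
end

section
/- Let λ = (λ₁,λ₂) ∈ ℚ² with λ₁ ∉ ℤ, λ₂ ∉ ℤ, λ₁+λ₂ ∉ ℤ, and not (λ₁−λ₂ ∈ ℤ and 3λ₂ ∈ ℤ). Then under the dot action of the group generated by S = [[-1,0],[1,1]] and R = [[1,1],[0,-1]] (with ρ = (1,1)), the only element w of this group with w·λ − λ ∈ ℤ² is the identity. -/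
/-- The dot action of a `2×2` rational matrix on `ℚ²`: `W·λ := W(λ + ρ) − ρ` with `ρ = (1,1)`. -/
def dotAct (W : Matrix (Fin 2) (Fin 2) ℚ) (l : Fin 2 → ℚ) : Fin 2 → ℚ :=
  W.mulVec (l + ![1, 1]) - ![1, 1]

/-- The matrix of the simple reflection `s`. -/
def Smat : Matrix (Fin 2) (Fin 2) ℚ := !![-1, 0; 1, 1]

/-- The matrix of the simple reflection `r`. -/
def Rmat : Matrix (Fin 2) (Fin 2) ℚ := !![1, 1; 0, -1]

/-- `Smat` as a unit (invertible matrix). -/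
def Sunit : (Matrix (Fin 2) (Fin 2) ℚ)ˣ :=
  ⟨Smat, Smat,
    by rw [show Smat = !![-1, 0; 1, 1] from rfl, Matrix.mul_fin_two, Matrix.one_fin_two]; norm_num,
    by rw [show Smat = !![-1, 0; 1, 1] from rfl, Matrix.mul_fin_two, Matrix.one_fin_two]; norm_num⟩

/-- `Rmat` as a unit (invertible matrix). -/
def Runit : (Matrix (Fin 2) (Fin 2) ℚ)ˣ :=
  ⟨Rmat, Rmat,
    by rw [show Rmat = !![1, 1; 0, -1] from rfl, Matrix.mul_fin_two, Matrix.one_fin_two]; norm_num,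
    by rw [show Rmat = !![1, 1; 0, -1] from rfl, Matrix.mul_fin_two, Matrix.one_fin_two]; norm_num⟩

namespace DotOrbitAux

abbrev M := Matrix (Fin 2) (Fin 2) ℚ

def SR : M := !![-1,-1;1,0]
def RS : M := !![0,1;-1,-1]
def SRS : M := !![0,-1;-1,0]

def inW (m : M) : Prop :=
  m = 1 ∨ m = Smat ∨ m = Rmat ∨ m = SR ∨ m = RS ∨ m = SRS

lemma units_inv_val (a : Mˣ) (m m' : M) (ha : (a : M) = m) (h : m * m' = 1) :
    ((a⁻¹ : Mˣ) : M) = m' := by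
  have : (a : M) * m' = 1 := ha ▸ h
  calc ((a⁻¹ : Mˣ) : M) = ((a⁻¹ : Mˣ) : M) * ((a : M) * m') := by rw [this, mul_one]
    _ = (((a⁻¹ * a : Mˣ)) : M) * m' := by rw [Units.val_mul, mul_assoc]
    _ = m' := by rw [inv_mul_cancel]; simp

lemma mem_inW : ∀ w ∈ Subgroup.closure ({Sunit, Runit} : Set Mˣ), inW (w : M) := by
  intro w hw
  induction hw using Subgroup.closure_induction with
  | mem x hx =>
    rcases hx with h | h
    · subst h; exact Or.inr (Or.inl rfl)
    · rw [Set.mem_singleton_iff] at h; subst h; exact Or.inr (Or.inr (Or.inl rfl))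
  | one => exact Or.inl rfl
  | mul a b _ _ ha hb =>
    rw [Units.val_mul]
    rcases ha with h|h|h|h|h|h <;> rcases hb with h'|h'|h'|h'|h'|h' <;> rw [h, h'] <;>
      unfold inW <;>
      simp only [one_mul, mul_one,
        show Smat = !![-1,0;1,1] from rfl, show Rmat = !![1,1;0,-1] from rfl,
        show SR = !![-1,-1;1,0] from rfl, show RS = !![0,1;-1,-1] from rfl,
        show SRS = !![0,-1;-1,0] from rfl, Matrix.mul_fin_two, Matrix.one_fin_two] <;>
      norm_num
  | inv a _ ha =>
    rcases ha with h|h|h|h|h|h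
    · exact Or.inl (units_inv_val a 1 1 h (one_mul 1))
    · refine Or.inr (Or.inl (units_inv_val a Smat Smat h ?_))
      rw [show Smat = !![-1,0;1,1] from rfl, Matrix.mul_fin_two, Matrix.one_fin_two]; norm_num
    · refine Or.inr (Or.inr (Or.inl (units_inv_val a Rmat Rmat h ?_)))
      rw [show Rmat = !![1,1;0,-1] from rfl, Matrix.mul_fin_two, Matrix.one_fin_two]; norm_num
    · refine Or.inr (Or.inr (Or.inr (Or.inr (Or.inl (units_inv_val a SR RS h ?_)))))
      rw [show SR = !![-1,-1;1,0] from rfl, show RS = !![0,1;-1,-1] from rfl,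
        Matrix.mul_fin_two, Matrix.one_fin_two]; norm_num
    · refine Or.inr (Or.inr (Or.inr (Or.inl (units_inv_val a RS SR h ?_))))
      rw [show RS = !![0,1;-1,-1] from rfl, show SR = !![-1,-1;1,0] from rfl,
        Matrix.mul_fin_two, Matrix.one_fin_two]; norm_num
    · refine Or.inr (Or.inr (Or.inr (Or.inr (Or.inr (units_inv_val a SRS SRS h ?_)))))
      rw [show SRS = !![0,-1;-1,0] from rfl, Matrix.mul_fin_two, Matrix.one_fin_two]; norm_num

end DotOrbitAux


/-- For a generic weight `λ` (neither integral, nor partially integral, nor of the special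
one-third type), the only element `w` of the Weyl group with `w·λ − λ ∈ ℤ²` is the identity. -/
theorem dot_orbit_generic (l : Fin 2 → ℚ)
    (h0 : ¬ ∃ k : ℤ, l 0 = (k : ℚ)) (h1 : ¬ ∃ k : ℤ, l 1 = (k : ℚ))
    (h2 : ¬ ∃ k : ℤ, l 0 + l 1 = (k : ℚ))
    (h3 : ¬ ((∃ k : ℤ, l 0 - l 1 = (k : ℚ)) ∧ (∃ k : ℤ, 3 * l 1 = (k : ℚ)))) :
    ∀ w ∈ Subgroup.closure ({Sunit, Runit} : Set (Matrix (Fin 2) (Fin 2) ℚ)ˣ),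
      (∀ i, ∃ k : ℤ, dotAct (w : Matrix (Fin 2) (Fin 2) ℚ) l i - l i = (k : ℚ)) → w = 1 := by
  intro w hw hint
  rcases DotOrbitAux.mem_inW w hw with h|h|h|h|h|h
  · exact Units.ext (by rw [h, Units.val_one])
  · -- Smat : second coordinate diff = l 0 + 1
    exfalso
    obtain ⟨k, hk⟩ := hint 1
    rw [h] at hk
    simp [dotAct, Smat, Matrix.mulVec, dotProduct, Fin.sum_univ_two,
      Matrix.vecHead, Matrix.vecTail] at hk
    exact h0 ⟨k - 1, by push_cast; linarith⟩
  · exfalso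
    obtain ⟨k, hk⟩ := hint 0
    rw [h] at hk
    simp [dotAct, Rmat, Matrix.mulVec, dotProduct, Fin.sum_univ_two,
      Matrix.vecHead, Matrix.vecTail] at hk
    exact h1 ⟨k - 1, by push_cast; linarith⟩
  · exfalso
    obtain ⟨k, hk⟩ := hint 0
    obtain ⟨k', hk'⟩ := hint 1
    rw [h] at hk hk'
    simp [dotAct, DotOrbitAux.SR, Matrix.mulVec, dotProduct, Fin.sum_univ_two,
      Matrix.vecHead, Matrix.vecTail] at hk hk'
    -- hk : -(l 0) - 1 - (l 1 + 1) - 1 - l 0 = k, i.e. -2 l0 - l1 - 3 = k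
    -- hk' : l 0 - 1 + 1 - ... : l 0 - l 1 = k' roughly
    refine h3 ⟨⟨k', by linarith⟩, ⟨-(k + 2*k' + 3), by push_cast; linarith⟩⟩
  · exfalso
    obtain ⟨k, hk⟩ := hint 0
    obtain ⟨k', hk'⟩ := hint 1
    rw [h] at hk hk'
    simp [dotAct, DotOrbitAux.RS, Matrix.mulVec, dotProduct, Fin.sum_univ_two,
      Matrix.vecHead, Matrix.vecTail] at hk hk'
    -- hk : l1 - l0 = k ;  hk' : -l0 - 2 l1 - 3 = k'
    refine h3 ⟨⟨-k, by push_cast; linarith⟩, ⟨-(k' + 2*k + 3) + 3*k, by push_cast; linarith⟩⟩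
  · exfalso
    obtain ⟨k, hk⟩ := hint 0
    rw [h] at hk
    simp [dotAct, DotOrbitAux.SRS, Matrix.mulVec, dotProduct, Fin.sum_univ_two,
      Matrix.vecHead, Matrix.vecTail] at hk
    exact h2 ⟨-(k + 2), by push_cast; linarith⟩
end
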